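/- Let λ ⊢ n, T a tableau of shape λ with content {1,...,n}, and M a semistandard tableau of shape λ with nonnegative entries. Then the polynomial (1/s_{M,T}) ∑_{τ ∈ R(T)} τ(p_{M,T}) is a sum of distinct monic monomials, all having the same exponent multiset as the entries of M (hence all of degree Σ(M)), and p_{M,T} is the unique largest among them in the order >_T. -/

import Mathlib

open MvPolynomial

noncomputable section
open scoped Classical

namespace GHS

def entrySumF (μ : YoungDiagram) (f : ℕ → ℕ → ℕ) : ℕ := ∑ c ∈ μ.cells, f c.1 c.2

def entryFun {μ : YoungDiagram} (M : SemistandardYoungTableau μ) : ℕ → ℕ → ℕ := fun r c => M r c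

def entrySum {μ : YoungDiagram} (M : SemistandardYoungTableau μ) : ℕ := entrySumF μ (entryFun M)

def entryMultisetF (μ : YoungDiagram) (f : ℕ → ℕ → ℕ) : Multiset ℕ :=
  μ.cells.val.map fun c => f c.1 c.2

def entryMultiset {μ : YoungDiagram} (M : SemistandardYoungTableau μ) : Multiset ℕ := entryMultisetF μ (entryFun M)

def countLtF (μ : YoungDiagram) (f : ℕ → ℕ → ℕ) (h : ℕ) : ℕ :=
  (μ.cells.filter fun c => f c.1 c.2 < h).card

def countGe {μ : YoungDiagram} (M : SemistandardYoungTableau μ) (t : ℕ) : ℕ :=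
  (μ.cells.filter fun c => t ≤ M c.1 c.2).card

def maxEntryF (μ : YoungDiagram) (f : ℕ → ℕ → ℕ) : ℕ := μ.cells.sup fun c => f c.1 c.2

def DspCF (n : ℕ) (μ : YoungDiagram) (f : ℕ → ℕ → ℕ) : Multiset ℕ :=
  (Finset.Icc 1 (maxEntryF μ f)).val.map fun h => n - countLtF μ f h

def DspC (n : ℕ) {μ : YoungDiagram} (M : SemistandardYoungTableau μ) : Multiset ℕ := DspCF n μ (entryFun M)

def stdFun (μ : YoungDiagram) (f : ℕ → ℕ → ℕ) : ℕ → ℕ → ℕ := fun r c =>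
  if (r, c) ∈ μ then
    (μ.cells.filter fun c' => f c'.1 c'.2 < f r c ∨ (f c'.1 c'.2 = f r c ∧ c'.2 < c)).card + 1
  else 0

def IsStandard (n : ℕ) {μ : YoungDiagram} (S : SemistandardYoungTableau μ) : Prop :=
  entryMultiset S = (Multiset.range n).map (· + 1)

def rowOfF (f : ℕ → ℕ → ℕ) (v : ℕ) : ℕ := sInf {r | ∃ c, f r c = v}

def DsiSet (n : ℕ) {μ : YoungDiagram} (S : SemistandardYoungTableau μ) : Finset ℕ :=
  (Finset.Ioo 0 n).filter fun i => rowOfF (entryFun S) i < rowOfF (entryFun S) (i + 1)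

def jseq (n k : ℕ) (J : Multiset ℕ) (h : ℕ) : ℕ :=
  if h = 0 then 0 else if h = k then n else (J.sort (· ≤ ·)).getD (h - 1) 0

def compFun (n k : ℕ) (J : Multiset ℕ) (h : ℕ) : ℕ := jseq n k J (h + 1) - jseq n k J h

def compMap (n k : ℕ) (J : Multiset ℕ) : Fin k → ℕ := fun h => compFun n k J (h : ℕ)

def contentOfJ (n k : ℕ) (J : Multiset ℕ) : Multiset ℕ :=
  (Multiset.range k).bind fun h => Multiset.replicate (compFun n k J h) h

def IsTabloid (n : ℕ) (μ : YoungDiagram) (T : Fin n → ℕ × ℕ) : Prop :=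
  Function.Injective T ∧ ∀ i, T i ∈ μ

def IsStdFill (n : ℕ) (T : Fin n → ℕ × ℕ) : Prop :=
  ∀ i j : Fin n,
    (((T i).1 = (T j).1 ∧ (T i).2 < (T j).2) ∨ ((T i).2 = (T j).2 ∧ (T i).1 < (T j).1)) → i < j

def rowGroup (n : ℕ) (T : Fin n → ℕ × ℕ) : Finset (Equiv.Perm (Fin n)) :=
  Finset.univ.filter fun τ => ∀ i, (T (τ i)).1 = (T i).1

def colGroup (n : ℕ) (T : Fin n → ℕ × ℕ) : Finset (Equiv.Perm (Fin n)) :=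
  Finset.univ.filter fun σ => ∀ i, (T (σ i)).2 = (T i).2

def pmonF (n : ℕ) (f : ℕ → ℕ → ℕ) (T : Fin n → ℕ × ℕ) : MvPolynomial (Fin n) ℚ :=
  ∏ i, X i ^ f (T i).1 (T i).2

def pexpF (n : ℕ) (f : ℕ → ℕ → ℕ) (T : Fin n → ℕ × ℕ) : Fin n →₀ ℕ :=
  Finsupp.equivFunOnFinite.symm fun i => f (T i).1 (T i).2

def symRT (n : ℕ) (T : Fin n → ℕ × ℕ) (p : MvPolynomial (Fin n) ℚ) : MvPolynomial (Fin n) ℚ :=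
  ∑ τ ∈ rowGroup n T, rename (⇑τ) p

def antisym (n : ℕ) (T : Fin n → ℕ × ℕ) (p : MvPolynomial (Fin n) ℚ) : MvPolynomial (Fin n) ℚ :=
  ∑ σ ∈ colGroup n T, ((Equiv.Perm.sign σ : ℤ) : ℚ) • rename (⇑σ) p

def youngSym (n : ℕ) (T : Fin n → ℕ × ℕ) (p : MvPolynomial (Fin n) ℚ) : MvPolynomial (Fin n) ℚ :=
  antisym n T (symRT n T p)

def stabCardF (n : ℕ) (f : ℕ → ℕ → ℕ) (T : Fin n → ℕ × ℕ) : ℕ :=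
  ((rowGroup n T).filter fun τ : Equiv.Perm (Fin n) => rename (⇑τ) (pmonF n f T) = pmonF n f T).card

def rowPoly (n : ℕ) (f : ℕ → ℕ → ℕ) (T : Fin n → ℕ × ℕ) : MvPolynomial (Fin n) ℚ :=
  (stabCardF n f T : ℚ)⁻¹ • symRT n T (pmonF n f T)

def FMTF (n : ℕ) (f : ℕ → ℕ → ℕ) (T : Fin n → ℕ × ℕ) : MvPolynomial (Fin n) ℚ :=
  (stabCardF n f T : ℚ)⁻¹ • youngSym n T (pmonF n f T)

def FMT (n : ℕ) {μ : YoungDiagram} (M : SemistandardYoungTableau μ) (T : Fin n → ℕ × ℕ) : MvPolynomial (Fin n) ℚ :=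
  FMTF n (entryFun M) T

def degT (n : ℕ) (T : Fin n → ℕ × ℕ) (d : Fin n →₀ ℕ) (j : ℕ) : ℕ :=
  ∑ i ∈ Finset.univ.filter fun i => (T i).2 = j, d i

def gtT (n : ℕ) (T : Fin n → ℕ × ℕ) (d e : Fin n →₀ ℕ) : Prop :=
  ∃ j, degT n T e j < degT n T d j ∧ ∀ j', j < j' → degT n T d j' = degT n T e j'

def VMF (n : ℕ) (μ : YoungDiagram) (f : ℕ → ℕ → ℕ) : Submodule ℚ (MvPolynomial (Fin n) ℚ) :=
  Submodule.span ℚ {p | ∃ T, IsTabloid n μ T ∧ p = FMTF n f T}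

def VM (n : ℕ) {μ : YoungDiagram} (M : SemistandardYoungTableau μ) : Submodule ℚ (MvPolynomial (Fin n) ℚ) :=
  VMF n μ (entryFun M)

def spechtP (n : ℕ) (T : Fin n → ℕ × ℕ) : MvPolynomial (Fin n) ℚ := ∏ i, X i ^ (T i).1

def SpechtSub (n : ℕ) (μ : YoungDiagram) : Submodule ℚ (MvPolynomial (Fin n) ℚ) :=
  Submodule.span ℚ {p | ∃ T, IsTabloid n μ T ∧ p = youngSym n T (spechtP n T)}

def EqHoms (n : ℕ) (W V : Submodule ℚ (MvPolynomial (Fin n) ℚ)) :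
    Submodule ℚ (W →ₗ[ℚ] MvPolynomial (Fin n) ℚ) where
  carrier := {g | (∀ x, g x ∈ V) ∧ ∀ (σ : Equiv.Perm (Fin n)) (x y : W),
      (y : MvPolynomial (Fin n) ℚ) = rename (⇑σ) (x : MvPolynomial (Fin n) ℚ) →
      g y = rename (⇑σ) (g x)}
  add_mem' := by
    rintro a b ⟨ha1, ha2⟩ ⟨hb1, hb2⟩
    refine ⟨fun x => ?_, fun σ x y hxy => ?_⟩
    · simpa using V.add_mem (ha1 x) (hb1 x)
    · simp [LinearMap.add_apply, map_add, ha2 σ x y hxy, hb2 σ x y hxy]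
  zero_mem' := ⟨fun x => by simp, fun σ x y hxy => by simp⟩
  smul_mem' := by
    rintro c a ⟨ha1, ha2⟩
    refine ⟨fun x => ?_, fun σ x y hxy => ?_⟩
    · simpa using V.smul_mem c (ha1 x)
    · simp [LinearMap.smul_apply, map_smul, ha2 σ x y hxy]

def multiplicityIn (n : ℕ) (W V : Submodule ℚ (MvPolynomial (Fin n) ℚ)) : ℕ :=
  Module.finrank ℚ ↑(EqHoms n W V)

def contentSub (n : ℕ) (μc : Multiset ℕ) : Submodule ℚ (MvPolynomial (Fin n) ℚ) :=
  Submodule.span ℚ {p | ∃ d : Fin n → ℕ, Finset.univ.val.map d = μc ∧ p = ∏ i, X i ^ d i}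

def padded (n : ℕ) (μc : Multiset ℕ) : Multiset ℕ :=
  μc + Multiset.replicate (n - Multiset.card μc) 0

def IsCocharge {μ : YoungDiagram} (C : SemistandardYoungTableau μ) : Prop :=
  ∀ h : ℕ, 0 < h → ∀ v ∈ μ.cells, C v.1 v.2 = h →
    (∀ v' ∈ μ.cells, C v'.1 v'.2 = h → v.2 ≤ v'.2) →
    ∃ v'' ∈ μ.cells, C v''.1 v''.2 = h - 1 ∧ v''.1 < v.1

def updF (f : ℕ → ℕ → ℕ) (r c v : ℕ) : ℕ → ℕ → ℕ :=
  fun r' c' => if r' = r ∧ c' = c then v else f r' c'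

def slide : ℕ → (ℕ → ℕ → ℕ) → ℕ × ℕ → (ℕ → ℕ → ℕ) × (ℕ × ℕ)
  | 0, f, p => (f, p)
  | fuel + 1, f, (r, c) =>
    let down := f (r + 1) c
    let right := f r (c + 1)
    if down = 0 ∧ right = 0 then (f, (r, c))
    else if right = 0 ∨ (down ≠ 0 ∧ down < right) then
      slide fuel (updF (updF f r c down) (r + 1) c 0) (r + 1, c)
    else
      slide fuel (updF (updF f r c right) r (c + 1) 0) (r, c + 1)

def evacAux : ℕ → (ℕ → ℕ → ℕ) → ℕ → ℕ → ℕ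
  | 0, _ => fun _ _ => 0
  | m + 1, f =>
    let gp := slide (m + 1) (updF f 0 0 0) (0, 0)
    updF (evacAux m gp.1) gp.2.1 gp.2.2 (m + 1)

def ctJfun (J : Multiset ℕ) (f : ℕ → ℕ → ℕ) : ℕ → ℕ → ℕ :=
  fun r c => J.countP fun j => j < f r c

def JminF (μ : YoungDiagram) (f : ℕ → ℕ → ℕ) : Multiset ℕ :=
  (Finset.Icc 1 (maxEntryF μ f)).val.map fun h => countLtF μ f h

def deltaOne (n : ℕ) (μ : YoungDiagram) (f : ℕ → ℕ → ℕ) (v : ℕ × ℕ) : Prop :=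
  ¬ (rowOfF (evacAux n (stdFun μ f)) n < v.1)

def hatAdd (n : ℕ) (μ : YoungDiagram) (f : ℕ → ℕ → ℕ) (v : ℕ × ℕ) : ℕ → ℕ → ℕ :=
  let Sv := evacAux (n + 1) (updF (evacAux n (stdFun μ f)) v.1 v.2 (n + 1))
  let Jp : Multiset ℕ := (JminF μ f).map (· + 1)
  if deltaOne n μ f v then ctJfun Jp Sv else ctJfun (1 ::ₘ Jp) Sv

def iotaHatFun (f : ℕ → ℕ → ℕ) : ℕ → ℕ → ℕ :=
  fun r c => if r = 0 then (if c = 0 then 0 else f 0 (c - 1)) else f r c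

def iotaT (n : ℕ) (lam : YoungDiagram) (T : Fin n → ℕ × ℕ) : Fin (n + 1) → ℕ × ℕ :=
  fun i => if h : (i : ℕ) < n then T ⟨(i : ℕ), h⟩ else (0, lam.rowLen 0)

def plusOneF (μ : YoungDiagram) (f : ℕ → ℕ → ℕ) : ℕ → ℕ → ℕ :=
  fun r c => if (r, c) ∈ μ then f r c + 1 else 0

def Omega (n : ℕ) (α : ℕ → ℕ) :=
  {w : Fin n → ℕ // ∀ h, (Finset.univ.filter fun i => w i = h).card = α h}

def shiftW (n : ℕ) (α : ℕ → ℕ) (σ : Equiv.Perm (Fin n)) (w : Omega n α) : Omega n α :=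
  ⟨fun i => w.1 (σ.symm i), by
    intro h
    have key : (Finset.univ.filter fun i => w.1 (σ.symm i) = h)
        = (Finset.univ.filter fun i => w.1 i = h).image σ := by
      ext i
      simp only [Finset.mem_filter, Finset.mem_univ, true_and, Finset.mem_image]
      constructor
      · intro hi
        exact ⟨σ.symm i, hi, Equiv.apply_symm_apply σ i⟩
      · rintro ⟨j, hj, rfl⟩
        simpa using hj
    rw [key, Finset.card_image_of_injective _ σ.injective]
    exact w.2 h⟩

def permOmega (n : ℕ) (α : ℕ → ℕ) (σ : Equiv.Perm (Fin n)) : Omega n α ≃ Omega n α where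
  toFun := shiftW n α σ
  invFun := shiftW n α σ⁻¹
  left_inv w := by
    apply Subtype.ext
    funext i
    simp [shiftW, Equiv.Perm.inv_def]
  right_inv w := by
    apply Subtype.ext
    funext i
    simp [shiftW, Equiv.Perm.inv_def]

def ExtPart (n d : ℕ) : Submodule ℚ (MvPolynomial (Fin (n + 1)) ℚ) :=
  ⨆ (lam : YoungDiagram) (_ : lam.card = n) (M : SemistandardYoungTableau lam) (_ : entrySum M = d)
    (v : ℕ × ℕ) (_ : v ∉ lam.cells) (ν : YoungDiagram) (_ : ν.cells = insert v lam.cells)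
    (_ : deltaOne n lam (entryFun M) v),
    VMF (n + 1) ν (hatAdd n lam (entryFun M) v)

def LEPart (n d : ℕ) : Submodule ℚ (MvPolynomial (Fin (n + 1)) ℚ) :=
  ⨆ (lam : YoungDiagram) (_ : lam.card = n) (M : SemistandardYoungTableau lam) (_ : entrySum M + n = d)
    (v : ℕ × ℕ) (_ : v ∉ lam.cells) (ν : YoungDiagram) (_ : ν.cells = insert v lam.cells)
    (_ : ¬ deltaOne n lam (entryFun M) v),
    VMF (n + 1) ν (hatAdd n lam (entryFun M) v)

def EPart (n d : ℕ) : Submodule ℚ (MvPolynomial (Fin (n + 1)) ℚ) :=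
  ⨆ (e : ℕ) (_ : e + (n + 1) = d),
    (homogeneousSubmodule (Fin (n + 1)) ℚ e).map
      (LinearMap.mulLeft ℚ (∏ i : Fin (n + 1), (X i : MvPolynomial (Fin (n + 1)) ℚ)))

lemma pexpF_apply (n : ℕ) (f : ℕ → ℕ → ℕ) (T : Fin n → ℕ × ℕ) (i : Fin n) :
    pexpF n f T i = f (T i).1 (T i).2 := rfl

lemma mem_rowGroup {n : ℕ} {T : Fin n → ℕ × ℕ} {τ : Equiv.Perm (Fin n)} :
    τ ∈ rowGroup n T ↔ ∀ i, (T (τ i)).1 = (T i).1 := by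
  simp [rowGroup]

lemma rowGroup_one (n : ℕ) (T : Fin n → ℕ × ℕ) : (1 : Equiv.Perm (Fin n)) ∈ rowGroup n T := by
  simp [mem_rowGroup]

lemma rowGroup_mul {n : ℕ} {T : Fin n → ℕ × ℕ} {τ σ : Equiv.Perm (Fin n)}
    (hτ : τ ∈ rowGroup n T) (hσ : σ ∈ rowGroup n T) : τ * σ ∈ rowGroup n T := by
  rw [mem_rowGroup] at *
  intro i
  simpa [Equiv.Perm.mul_apply] using (hτ (σ i)).trans (hσ i)

lemma rowGroup_inv {n : ℕ} {T : Fin n → ℕ × ℕ} {τ : Equiv.Perm (Fin n)}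
    (hτ : τ ∈ rowGroup n T) : τ⁻¹ ∈ rowGroup n T := by
  rw [mem_rowGroup] at *
  intro i
  have := hτ (τ⁻¹ i)
  simpa using this.symm

lemma pmonF_eq_monomial (n : ℕ) (f : ℕ → ℕ → ℕ) (T : Fin n → ℕ × ℕ) :
    pmonF n f T = monomial (pexpF n f T) (1 : ℚ) := by
  rw [← prod_X_pow_eq_monomial, pmonF]
  have h1 : ∀ i : Fin n, X (R := ℚ) i ^ f (T i).1 (T i).2 = X i ^ pexpF n f T i := fun i => rfl
  simp_rw [h1]
  exact (Finset.prod_subset (Finset.subset_univ _) (fun i _ hi => by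
    rw [Finsupp.notMem_support_iff] at hi
    rw [hi, pow_zero])).symm

lemma rename_pmonF (n : ℕ) (f : ℕ → ℕ → ℕ) (T : Fin n → ℕ × ℕ) (τ : Equiv.Perm (Fin n)) :
    rename (⇑τ) (pmonF n f T) = monomial (Finsupp.mapDomain (⇑τ) (pexpF n f T)) (1 : ℚ) := by
  rw [pmonF_eq_monomial, rename_monomial]



lemma sum_le_sum_of_card_eq {α : Type*} [DecidableEq α] {s A B : Finset α} (g : α → ℕ)
    (hA : A ⊆ s) (hB : B ⊆ s) (hc : A.card = B.card)
    (hg : ∀ a ∈ s, a ∉ B → ∀ b ∈ B, g a ≤ g b) :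
    ∑ a ∈ A, g a ≤ ∑ b ∈ B, g b := by
  have hcc : (A \ B).card = (B \ A).card := Finset.card_sdiff_comm hc
  have key : ∑ a ∈ A \ B, g a ≤ ∑ b ∈ B \ A, g b := by
    let e := Finset.equivOfCardEq hcc
    have h1 : ∑ a ∈ A \ B, g a = ∑ x : {x // x ∈ A \ B}, g x := (Finset.sum_coe_sort _ _).symm
    have h2 : ∑ b ∈ B \ A, g b = ∑ x : {x // x ∈ B \ A}, g x := (Finset.sum_coe_sort _ _).symm
    rw [h1, h2, ← Equiv.sum_comp e (fun x : {x // x ∈ B \ A} => g x)]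
    refine Finset.sum_le_sum fun x _ => ?_
    have hx1 : (x : α) ∈ s := hA (Finset.mem_sdiff.1 x.2).1
    have hx2 : (x : α) ∉ B := (Finset.mem_sdiff.1 x.2).2
    have hex : ((e x : α)) ∈ B := (Finset.mem_sdiff.1 (e x).2).1
    exact hg x hx1 hx2 _ hex
  calc ∑ a ∈ A, g a = ∑ a ∈ A ∩ B, g a + ∑ a ∈ A \ B, g a :=
        (Finset.sum_inter_add_sum_sdiff A B g).symm
    _ ≤ ∑ a ∈ A ∩ B, g a + ∑ b ∈ B \ A, g b := by omega
    _ = ∑ a ∈ B ∩ A, g a + ∑ b ∈ B \ A, g b := by rw [Finset.inter_comm]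
    _ = ∑ b ∈ B, g b := Finset.sum_inter_add_sum_sdiff B A g

lemma sum_perm_filter {n : ℕ} (ρ : Equiv.Perm (Fin n)) (P : Fin n → Prop) [DecidablePred P]
    (g : Fin n → ℕ) :
    ∑ i ∈ Finset.univ.filter (fun i => P (ρ i)), g (ρ i) = ∑ i ∈ Finset.univ.filter P, g i := by
  refine Finset.sum_bij (fun i _ => ρ i) ?_ ?_ ?_ ?_
  · intro i hi
    simp only [Finset.mem_filter, Finset.mem_univ, true_and] at hi ⊢
    exact hi
  · intro i _ i' _ h
    exact ρ.injective h
  · intro i hi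
    refine ⟨ρ.symm i, ?_, by simp⟩
    simp only [Finset.mem_filter, Finset.mem_univ, true_and] at hi ⊢
    simpa using hi
  · intro i _; rfl


variable {n : ℕ} {f : ℕ → ℕ → ℕ} {T : Fin n → ℕ × ℕ}

def cnt (n : ℕ) (f : ℕ → ℕ → ℕ) (T : Fin n → ℕ × ℕ) (e : Fin n →₀ ℕ) : ℕ :=
  ((rowGroup n T).filter fun τ : Equiv.Perm (Fin n) =>
    Finsupp.mapDomain (⇑τ) (pexpF n f T) = e).card

lemma coeff_symRT (e : Fin n →₀ ℕ) :
    coeff e (symRT n T (pmonF n f T)) = (cnt n f T e : ℚ) := by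
  rw [symRT]
  rw [MvPolynomial.coeff_sum]
  rw [cnt, Finset.card_filter]
  push_cast
  refine Finset.sum_congr rfl fun τ _ => ?_
  rw [rename_pmonF, coeff_monomial]

lemma stabCardF_eq_cnt : stabCardF n f T = cnt n f T (pexpF n f T) := by
  rw [stabCardF, cnt]
  congr 1
  apply Finset.filter_congr
  intro τ _
  rw [rename_pmonF, pmonF_eq_monomial]
  constructor
  · intro h
    exact monomial_left_injective (one_ne_zero) h
  · intro h
    rw [h]

lemma stabCardF_pos : 0 < stabCardF n f T := by
  rw [stabCardF, Finset.card_pos]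
  refine ⟨1, Finset.mem_filter.2 ⟨rowGroup_one n T, ?_⟩⟩
  simp

lemma cnt_eq_of_mem {e : Fin n →₀ ℕ} {τ0 : Equiv.Perm (Fin n)} (hτ0 : τ0 ∈ rowGroup n T)
    (he : Finsupp.mapDomain (⇑τ0) (pexpF n f T) = e) :
    cnt n f T e = stabCardF n f T := by
  rw [stabCardF_eq_cnt, cnt, cnt]
  refine (Finset.card_bij' (fun σ _ => τ0 * σ) (fun τ _ => τ0⁻¹ * τ) ?_ ?_ ?_ ?_).symm
  · intro σ hσ
    rw [Finset.mem_filter] at *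
    refine ⟨rowGroup_mul hτ0 hσ.1, ?_⟩
    have h2 : ⇑(τ0 * σ) = ⇑τ0 ∘ ⇑σ := rfl
    rw [h2, Finsupp.mapDomain_comp, hσ.2, he]
  · intro τ hτ
    rw [Finset.mem_filter] at *
    refine ⟨rowGroup_mul (rowGroup_inv hτ0) hτ.1, ?_⟩
    have h2 : ⇑(τ0⁻¹ * τ) = ⇑τ0⁻¹ ∘ ⇑τ := rfl
    rw [h2, Finsupp.mapDomain_comp, hτ.2, ← he, ← Finsupp.mapDomain_comp]
    have h3 : ⇑τ0⁻¹ ∘ ⇑τ0 = id := by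
      funext i; simp
    rw [h3, Finsupp.mapDomain_id]
  · intro σ _; group
  · intro τ _; group

lemma coeff_rowPoly (e : Fin n →₀ ℕ) :
    coeff e (rowPoly n f T) = (stabCardF n f T : ℚ)⁻¹ * (cnt n f T e : ℚ) := by
  rw [rowPoly, coeff_smul, coeff_symRT, smul_eq_mul]

lemma mem_support_rowPoly_iff {e : Fin n →₀ ℕ} :
    e ∈ (rowPoly n f T).support ↔ ∃ τ ∈ rowGroup n T, Finsupp.mapDomain (⇑τ) (pexpF n f T) = e := by
  rw [MvPolynomial.mem_support_iff, coeff_rowPoly]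
  constructor
  · intro h
    have : cnt n f T e ≠ 0 := by
      intro h0
      rw [h0] at h
      simp at h
    rw [cnt] at this
    obtain ⟨τ, hτ⟩ := Finset.card_pos.1 (Nat.pos_of_ne_zero this)
    rw [Finset.mem_filter] at hτ
    exact ⟨τ, hτ.1, hτ.2⟩
  · rintro ⟨τ, hτ, he⟩
    rw [cnt_eq_of_mem hτ he]
    have h0 : (stabCardF n f T : ℚ) ≠ 0 := by
      exact_mod_cast (stabCardF_pos (n := n) (f := f) (T := T)).ne'
    field_simp
    exact one_ne_zero

lemma coeff_rowPoly_support {e : Fin n →₀ ℕ} (he : e ∈ (rowPoly n f T).support) :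
    coeff e (rowPoly n f T) = 1 := by
  obtain ⟨τ, hτ, hτe⟩ := mem_support_rowPoly_iff.1 he
  rw [coeff_rowPoly, cnt_eq_of_mem hτ hτe]
  have h0 : (stabCardF n f T : ℚ) ≠ 0 := by
    exact_mod_cast (stabCardF_pos (n := n) (f := f) (T := T)).ne'
  field_simp

lemma pexpF_mem_support : pexpF n f T ∈ (rowPoly n f T).support := by
  rw [mem_support_rowPoly_iff]
  exact ⟨1, rowGroup_one n T, by simp [Finsupp.mapDomain_id]⟩



def Sfx {n : ℕ} (T : Fin n → ℕ × ℕ) (g : Fin n → ℕ) (j : ℕ) : ℕ :=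
  ∑ i ∈ Finset.univ.filter (fun i => j ≤ (T i).2), g i

def SfxR {n : ℕ} (T : Fin n → ℕ × ℕ) (g : Fin n → ℕ) (r j : ℕ) : ℕ :=
  ∑ i ∈ Finset.univ.filter (fun i => (T i).1 = r ∧ j ≤ (T i).2), g i

variable {n : ℕ} {T : Fin n → ℕ × ℕ}

lemma SfxR_le {τ : Equiv.Perm (Fin n)} (hτ : τ ∈ rowGroup n T) (h : Fin n → ℕ)
    (hmono : ∀ a b : Fin n, (T a).1 = (T b).1 → (T a).2 ≤ (T b).2 → h a ≤ h b) (r j : ℕ) :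
    SfxR T (fun i => h (τ⁻¹ i)) r j ≤ SfxR T h r j := by
  classical
  have hre : SfxR T (fun i => h (τ⁻¹ i)) r j
      = ∑ i ∈ Finset.univ.filter (fun i => (T (τ i)).1 = r ∧ j ≤ (T (τ i)).2), h i := by
    rw [SfxR, ← sum_perm_filter τ (fun i => (T i).1 = r ∧ j ≤ (T i).2) (fun i => h (τ⁻¹ i))]
    exact Finset.sum_congr rfl (fun i _ => by simp)
  rw [hre, SfxR]
  have hrowτ := mem_rowGroup.1 hτ
  refine sum_le_sum_of_card_eq (s := Finset.univ.filter (fun i => (T i).1 = r)) h ?_ ?_ ?_ ?_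
  · intro i hi
    simp only [Finset.mem_filter, Finset.mem_univ, true_and] at hi ⊢
    rw [← hrowτ i]
    exact hi.1
  · intro i hi
    simp only [Finset.mem_filter, Finset.mem_univ, true_and] at hi ⊢
    exact hi.1
  · have himg : (Finset.univ.filter (fun i => (T i).1 = r ∧ j ≤ (T i).2))
        = (Finset.univ.filter (fun i => (T (τ i)).1 = r ∧ j ≤ (T (τ i)).2)).image τ := by
      ext i'
      simp only [Finset.mem_image, Finset.mem_filter, Finset.mem_univ, true_and]
      constructor
      · intro hi'
        exact ⟨τ⁻¹ i', by simpa using hi', by simp⟩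
      · rintro ⟨i, hi, rfl⟩
        exact hi
    rw [himg, Finset.card_image_of_injective _ τ.injective]
  · intro a ha hna b hb
    simp only [Finset.mem_filter, Finset.mem_univ, true_and, not_and, not_le] at ha hna hb
    refine hmono a b (ha.trans hb.1.symm) ?_
    exact le_of_lt (lt_of_lt_of_le (hna ha) hb.2)

lemma Sfx_eq_sum_rows (g : Fin n → ℕ) (j : ℕ) :
    Sfx T g j = ∑ r ∈ Finset.univ.image (fun i => (T i).1), SfxR T g r j := by
  classical
  rw [Sfx, ← Finset.sum_fiberwise_of_maps_to
    (g := fun i : Fin n => (T i).1) (t := Finset.univ.image (fun i => (T i).1))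
    (fun x _ => Finset.mem_image_of_mem _ (Finset.mem_univ x)) g]
  refine Finset.sum_congr rfl fun r _ => ?_
  rw [SfxR, Finset.filter_filter]
  exact Finset.sum_congr (Finset.filter_congr fun i _ => by tauto) fun _ _ => rfl

lemma Sfx_le {τ : Equiv.Perm (Fin n)} (hτ : τ ∈ rowGroup n T) (h : Fin n → ℕ)
    (hmono : ∀ a b : Fin n, (T a).1 = (T b).1 → (T a).2 ≤ (T b).2 → h a ≤ h b) (j : ℕ) :
    Sfx T (fun i => h (τ⁻¹ i)) j ≤ Sfx T h j := by
  rw [Sfx_eq_sum_rows, Sfx_eq_sum_rows]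
  exact Finset.sum_le_sum fun r _ => SfxR_le hτ h hmono r j

lemma SfxR_eq_of_Sfx_eq {τ : Equiv.Perm (Fin n)} (hτ : τ ∈ rowGroup n T) (h : Fin n → ℕ)
    (hmono : ∀ a b : Fin n, (T a).1 = (T b).1 → (T a).2 ≤ (T b).2 → h a ≤ h b) {j : ℕ}
    (heq : Sfx T (fun i => h (τ⁻¹ i)) j = Sfx T h j) (r : ℕ) :
    SfxR T (fun i => h (τ⁻¹ i)) r j = SfxR T h r j := by
  classical
  by_cases hr : r ∈ Finset.univ.image (fun i : Fin n => (T i).1)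
  · rw [Sfx_eq_sum_rows, Sfx_eq_sum_rows] at heq
    exact (Finset.sum_eq_sum_iff_of_le fun r' _ => SfxR_le hτ h hmono r' j).1 heq r hr
  · have hempty : Finset.univ.filter (fun i : Fin n => (T i).1 = r ∧ j ≤ (T i).2) = ∅ := by
      refine Finset.filter_false_of_mem fun i _ => ?_
      rintro ⟨hi, -⟩
      exact hr (hi ▸ Finset.mem_image_of_mem _ (Finset.mem_univ i))
    rw [SfxR, SfxR, hempty, Finset.sum_empty, Finset.sum_empty]

lemma Sfx_split (g : Fin n → ℕ) (j : ℕ) :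
    Sfx T g j = (∑ i ∈ Finset.univ.filter (fun i => (T i).2 = j), g i) + Sfx T g (j + 1) := by
  classical
  rw [Sfx, ← Finset.sum_filter_add_sum_filter_not
    (Finset.univ.filter (fun i => j ≤ (T i).2)) (fun i => (T i).2 = j) g]
  congr 1
  · rw [Finset.filter_filter]
    exact Finset.sum_congr (Finset.filter_congr fun i _ => by omega) fun _ _ => rfl
  · rw [Sfx, Finset.filter_filter]
    exact Finset.sum_congr (Finset.filter_congr fun i _ => by omega) fun _ _ => rfl

lemma SfxR_split (g : Fin n → ℕ) (r j : ℕ) :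
    SfxR T g r j = (∑ i ∈ Finset.univ.filter (fun i => (T i).1 = r ∧ (T i).2 = j), g i)
      + SfxR T g r (j + 1) := by
  classical
  rw [SfxR, ← Finset.sum_filter_add_sum_filter_not
    (Finset.univ.filter (fun i => (T i).1 = r ∧ j ≤ (T i).2)) (fun i => (T i).2 = j) g]
  congr 1
  · rw [Finset.filter_filter]
    exact Finset.sum_congr (Finset.filter_congr fun i _ => by
      constructor
      · rintro ⟨⟨h1, h2⟩, h3⟩; exact ⟨h1, h3⟩
      · rintro ⟨h1, h3⟩; exact ⟨⟨h1, h3.ge⟩, h3⟩) fun _ _ => rfl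
  · rw [SfxR, Finset.filter_filter]
    exact Finset.sum_congr (Finset.filter_congr fun i _ => by
      constructor
      · rintro ⟨⟨h1, h2⟩, h3⟩; exact ⟨h1, by omega⟩
      · rintro ⟨h1, h3⟩; exact ⟨⟨h1, by omega⟩, by omega⟩) fun _ _ => rfl

lemma Sfx_zero (g : Fin n → ℕ) {j : ℕ} (hj : ∀ i, (T i).2 < j) : Sfx T g j = 0 := by
  classical
  rw [Sfx]
  refine Finset.sum_eq_zero fun i hi => ?_
  simp only [Finset.mem_filter, Finset.mem_univ, true_and] at hi
  exact absurd hi (not_le.2 (hj i))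

lemma eq_of_all_Sfx_eq (hinj : Function.Injective T) {τ : Equiv.Perm (Fin n)}
    (hτ : τ ∈ rowGroup n T) (h : Fin n → ℕ)
    (hmono : ∀ a b : Fin n, (T a).1 = (T b).1 → (T a).2 ≤ (T b).2 → h a ≤ h b)
    (heq : ∀ j, Sfx T (fun i => h (τ⁻¹ i)) j = Sfx T h j) (i0 : Fin n) :
    h (τ⁻¹ i0) = h i0 := by
  classical
  set r := (T i0).1 with hr
  set c := (T i0).2 with hc
  have hsingle : Finset.univ.filter (fun i : Fin n => (T i).1 = r ∧ (T i).2 = c) = {i0} := by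
    ext i
    simp only [Finset.mem_filter, Finset.mem_univ, true_and, Finset.mem_singleton]
    constructor
    · rintro ⟨h1, h2⟩
      exact hinj (Prod.ext h1 h2)
    · rintro rfl; exact ⟨rfl, rfl⟩
  have h1 : ∀ j, SfxR T (fun i => h (τ⁻¹ i)) r j = SfxR T h r j :=
    fun j => SfxR_eq_of_Sfx_eq hτ h hmono (heq j) r
  have h2 := SfxR_split (T := T) (fun i => h (τ⁻¹ i)) r c
  have h3 := SfxR_split (T := T) h r c
  rw [hsingle, Finset.sum_singleton] at h2 h3
  have := h1 c
  have := h1 (c + 1)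
  omega

lemma gtT_of_ne (hinj : Function.Injective T) {τ : Equiv.Perm (Fin n)}
    (hτ : τ ∈ rowGroup n T) (h : Fin n → ℕ)
    (hmono : ∀ a b : Fin n, (T a).1 = (T b).1 → (T a).2 ≤ (T b).2 → h a ≤ h b)
    (d e : Fin n →₀ ℕ) (hd : ∀ i, d i = h i) (he : ∀ i, e i = h (τ⁻¹ i))
    (hne : ∃ i, h (τ⁻¹ i) ≠ h i) :
    gtT n T d e := by
  classical
  set g : Fin n → ℕ := fun i => h (τ⁻¹ i) with hg
  have hdeg_d : ∀ j, degT n T d j = ∑ i ∈ Finset.univ.filter (fun i => (T i).2 = j), h i :=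
    fun j => Finset.sum_congr rfl fun i _ => hd i
  have hdeg_e : ∀ j, degT n T e j = ∑ i ∈ Finset.univ.filter (fun i => (T i).2 = j), g i :=
    fun j => Finset.sum_congr rfl fun i _ => he i
  set Bnd : ℕ := (Finset.univ.sup fun i : Fin n => (T i).2) + 1 with hBnd
  have hzero : ∀ j, Bnd ≤ j → Sfx T g j = 0 ∧ Sfx T h j = 0 := by
    intro j hj
    have hcol : ∀ i, (T i).2 < j := by
      intro i
      have h1 : (T i).2 ≤ Finset.univ.sup fun i : Fin n => (T i).2 :=
        Finset.le_sup (f := fun i : Fin n => (T i).2) (Finset.mem_univ i)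
      omega
    exact ⟨Sfx_zero g hcol, Sfx_zero h hcol⟩
  set bad : Finset ℕ := (Finset.range Bnd).filter (fun j => Sfx T g j ≠ Sfx T h j) with hbadset
  have hbadmem : ∀ j, Sfx T g j ≠ Sfx T h j → j ∈ bad := by
    intro j hj
    have hjB : j < Bnd := by
      by_contra hc
      obtain ⟨hz1, hz2⟩ := hzero j (le_of_not_gt hc)
      exact hj (hz1.trans hz2.symm)
    exact Finset.mem_filter.2 ⟨Finset.mem_range.2 hjB, hj⟩
  have hbadne : bad.Nonempty := by
    obtain ⟨i, hi⟩ := hne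
    by_contra hc
    rw [Finset.not_nonempty_iff_eq_empty] at hc
    have hall : ∀ j, Sfx T g j = Sfx T h j := by
      intro j
      by_contra hj
      have := hbadmem j hj
      rw [hc] at this
      exact absurd this (Finset.notMem_empty j)
    exact hi (eq_of_all_Sfx_eq hinj hτ h hmono hall i)
  set j0 := bad.max' hbadne with hj0
  have hgtj0 : ∀ j, j0 < j → Sfx T g j = Sfx T h j := by
    intro j hj
    by_contra hne2
    exact absurd (Finset.le_max' bad j (hbadmem j hne2)) (by omega)
  have hj0bad : Sfx T g j0 ≠ Sfx T h j0 :=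
    (Finset.mem_filter.1 (bad.max'_mem hbadne)).2
  have hlt : Sfx T g j0 < Sfx T h j0 := lt_of_le_of_ne (Sfx_le hτ h hmono j0) hj0bad
  refine ⟨j0, ?_, ?_⟩
  · have hsg := Sfx_split (T := T) g j0
    have hsh := Sfx_split (T := T) h j0
    have hnext := hgtj0 (j0 + 1) (by omega)
    rw [hdeg_d, hdeg_e]
    omega
  · intro j' hj'
    have hsg := Sfx_split (T := T) g j'
    have hsh := Sfx_split (T := T) h j'
    have h1 := hgtj0 j' hj'
    have h2 := hgtj0 (j' + 1) (by omega)
    rw [hdeg_d, hdeg_e]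
    omega



lemma map_univ_val_perm {n : ℕ} (σ : Equiv.Perm (Fin n)) :
    Finset.univ.val.map ⇑σ = Finset.univ.val := by
  have h1 := Finset.map_univ_equiv σ
  calc Finset.univ.val.map ⇑σ = (Finset.univ.map σ.toEmbedding).val := by
        rw [Finset.map_val]; rfl
    _ = Finset.univ.val := by rw [h1]

lemma map_univ_pexp {n : ℕ} {lam : YoungDiagram} {T : Fin n → ℕ × ℕ}
    (hinj : Function.Injective T) (hmem : ∀ i, T i ∈ lam) (hcard : lam.card = n)
    (f : ℕ → ℕ → ℕ) :
    Finset.univ.val.map ⇑(pexpF n f T) = lam.cells.val.map (fun c => f c.1 c.2) := by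
  classical
  have h1 : (⇑(pexpF n f T) : Fin n → ℕ) = (fun c : ℕ × ℕ => f c.1 c.2) ∘ T :=
    funext fun i => rfl
  rw [h1, ← Multiset.map_map]
  congr 1
  have himg : Finset.univ.image T = lam.cells := by
    apply Finset.eq_of_subset_of_card_le
    · intro c hc
      rw [Finset.mem_image] at hc
      obtain ⟨i, -, rfl⟩ := hc
      exact (YoungDiagram.mem_cells _).2 (hmem i)
    · rw [Finset.card_image_of_injective _ hinj, Finset.card_univ, Fintype.card_fin]
      exact le_of_eq hcard
  calc Finset.univ.val.map T = (Finset.univ.image T).val :=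
        (Finset.image_val_of_injOn hinj.injOn).symm
    _ = lam.cells.val := by rw [himg]



theorem stmt9 (n : ℕ) (hn : 1 ≤ n) (lam : YoungDiagram) (hcard : lam.card = n)
    (T : Fin n → ℕ × ℕ) (hT : IsTabloid n lam T) (M : SemistandardYoungTableau lam) :
    (∀ e ∈ (rowPoly n (entryFun M) T).support, coeff e (rowPoly n (entryFun M) T) = 1) ∧
    (∀ e ∈ (rowPoly n (entryFun M) T).support,
      Finset.univ.val.map ⇑e = entryMultiset M) ∧
    pexpF n (entryFun M) T ∈ (rowPoly n (entryFun M) T).support ∧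
    ∀ e ∈ (rowPoly n (entryFun M) T).support,
      e ≠ pexpF n (entryFun M) T → gtT n T (pexpF n (entryFun M) T) e := by
  classical
  obtain ⟨hinj, hmem⟩ := hT
  set f : ℕ → ℕ → ℕ := entryFun M with hf
  have hmono : ∀ a b : Fin n, (T a).1 = (T b).1 → (T a).2 ≤ (T b).2 →
      f (T a).1 (T a).2 ≤ f (T b).1 (T b).2 := by
    intro a b h1 h2
    rw [h1]
    have hcell : ((T b).1, (T b).2) ∈ lam := by rw [Prod.mk.eta]; exact hmem b
    exact M.row_weak_of_le h2 hcell
  have hefun : ∀ e ∈ (rowPoly n f T).support, ∀ τ : Equiv.Perm (Fin n),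
      Finsupp.mapDomain (⇑τ) (pexpF n f T) = e → ∀ i, e i = pexpF n f T (τ⁻¹ i) := by
    intro e _ τ heq i
    have h2 := Finsupp.mapDomain_apply τ.injective (pexpF n f T) (τ⁻¹ i)
    rw [heq] at h2
    simpa using h2
  refine ⟨fun e he => coeff_rowPoly_support he, fun e he => ?_, pexpF_mem_support, ?_⟩
  · obtain ⟨τ, hτ, heq⟩ := mem_support_rowPoly_iff.1 he
    have h1 : (⇑e : Fin n → ℕ) = ⇑(pexpF n f T) ∘ ⇑(τ⁻¹ : Equiv.Perm (Fin n)) :=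
      funext fun i => hefun e he τ heq i
    rw [h1, ← Multiset.map_map, map_univ_val_perm, map_univ_pexp hinj hmem hcard f]
    rfl
  · intro e he hne
    obtain ⟨τ, hτ, heq⟩ := mem_support_rowPoly_iff.1 he
    set h : Fin n → ℕ := fun i => f (T i).1 (T i).2 with hh
    have hd : ∀ i, pexpF n f T i = h i := fun i => rfl
    have he' : ∀ i, e i = h (τ⁻¹ i) := fun i => hefun e he τ heq i
    refine gtT_of_ne hinj hτ h hmono _ _ hd he' ?_
    by_contra hc
    push_neg at hc
    apply hne
    ext i
    rw [he' i, hc i]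
    exact (hd i).symm

end GHS
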